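/- Let G be a finite group and let X and Y be finite G-sets. If for every subgroup H of G the fixed-point sets have the same cardinality, |X^H| = |Y^H|, then X and Y are isomorphic as G-sets, i.e., there exists a G-equivariant bijection from X to Y. -/

import Mathlib

open MulAction

private lemma gset_aux {G : Type*} [Group G] [Fintype G] :
    ∀ n : ℕ, ∀ (X Y : Type*) [Fintype X] [Fintype Y] [MulAction G X] [MulAction G Y],
      Fintype.card X = n →
      (∀ H : Subgroup G,
        Nat.card {x : X // ∀ g ∈ H, g • x = x} = Nat.card {y : Y // ∀ g ∈ H, g • y = y}) →
      ∃ f : X ≃ Y, ∀ (g : G) (x : X), f (g • x) = g • f x := by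
  intro n
  induction n using Nat.strong_induction_on with
  | _ n ih =>
  intro X Y _ _ _ _ hcard h
  by_cases hX : IsEmpty X
  · -- both empty
    have hbot : Nat.card X = Nat.card Y := by
      have e1 : {x : X // ∀ g ∈ (⊥ : Subgroup G), g • x = x} ≃ X :=
        Equiv.subtypeUnivEquiv (fun x g hg => by
          rcases Subgroup.mem_bot.mp hg with rfl; simp)
      have e2 : {y : Y // ∀ g ∈ (⊥ : Subgroup G), g • y = y} ≃ Y :=
        Equiv.subtypeUnivEquiv (fun y g hg => by
          rcases Subgroup.mem_bot.mp hg with rfl; simp)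
      rw [← Nat.card_congr e1, ← Nat.card_congr e2]
      exact h ⊥
    have hY : IsEmpty Y := by
      have h0 : Nat.card Y = 0 := by
        rw [← hbot, Nat.card_of_isEmpty]
      rcases Nat.card_eq_zero.mp h0 with h' | h'
      · exact h'
      · exact absurd h' (not_infinite_iff_finite.mpr (Finite.of_fintype Y))
    exact ⟨Equiv.equivOfIsEmpty X Y, fun g x => hX.elim x⟩
  · rw [not_isEmpty_iff] at hX
    classical
    -- the set of subgroups with a fixed point in X
    set S : Set (Subgroup G) := {K | Nonempty {x : X // ∀ g ∈ K, g • x = x}} with hS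
    have hSne : S.Nonempty := by
      obtain ⟨x⟩ := hX
      exact ⟨⊥, ⟨x, fun g hg => by rcases Subgroup.mem_bot.mp hg with rfl; simp⟩⟩
    obtain ⟨H, hHS, hHmax⟩ : ∃ a ∈ S, ∀ a' ∈ S, id a ≤ id a' → id a = id a' := by
      obtain ⟨a, ha, hmax⟩ := Set.Finite.exists_maximalFor id S (Set.toFinite S) hSne
      exact ⟨a, ha, fun a' ha' hle => le_antisymm hle (hmax ha' hle)⟩
    simp only [id] at hHmax
    obtain ⟨x₀, hx₀⟩ := hHS
    -- X^K nonempty iff Y^K nonempty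
    have hXY : ∀ K : Subgroup G, Nonempty {x : X // ∀ g ∈ K, g • x = x} ↔
        Nonempty {y : Y // ∀ g ∈ K, g • y = y} := by
      intro K
      constructor
      · intro hne
        haveI := hne
        have hpos : 0 < Nat.card {x : X // ∀ g ∈ K, g • x = x} := Nat.card_pos
        rw [h K] at hpos
        exact (Nat.card_pos_iff.mp hpos).1
      · intro hne
        haveI := hne
        have hpos : 0 < Nat.card {y : Y // ∀ g ∈ K, g • y = y} := Nat.card_pos
        rw [← h K] at hpos
        exact (Nat.card_pos_iff.mp hpos).1
    -- stabilizer of x₀ is H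
    have hstabx : stabilizer G x₀ = H :=
      (hHmax _ ⟨x₀, fun g hg => hg⟩ (fun g hg => mem_stabilizer_iff.mpr (hx₀ g hg))).symm
    -- get y₀
    obtain ⟨y₀, hy₀⟩ : Nonempty {y : Y // ∀ g ∈ H, g • y = y} := (hXY H).mp ⟨x₀, hx₀⟩
    have hstaby : stabilizer G y₀ = H := by
      have hmem : stabilizer G y₀ ∈ S :=
        (hXY (stabilizer G y₀)).mpr ⟨y₀, fun g hg => hg⟩
      exact (hHmax _ hmem (fun g hg => mem_stabilizer_iff.mpr (hy₀ g hg))).symm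
    -- key: a • x₀ = b • x₀ ↔ a • y₀ = b • y₀
    have hkey : ∀ a b : G, a • x₀ = b • x₀ ↔ a • y₀ = b • y₀ := by
      intro a b
      have h1 : a • x₀ = b • x₀ ↔ (b⁻¹ * a) ∈ stabilizer G x₀ := by
        rw [mem_stabilizer_iff, mul_smul, inv_smul_eq_iff, eq_comm]
      have h2 : a • y₀ = b • y₀ ↔ (b⁻¹ * a) ∈ stabilizer G y₀ := by
        rw [mem_stabilizer_iff, mul_smul, inv_smul_eq_iff, eq_comm]
      rw [h1, h2, hstabx, hstaby]
    -- equivariant bijection between orbits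
    let Φ : {x : X // x ∈ orbit G x₀} → {y : Y // y ∈ orbit G y₀} := fun z =>
      ⟨(Classical.choose z.2 : G) • y₀, mem_orbit _ _⟩
    have hΦspec : ∀ (z : {x : X // x ∈ orbit G x₀}) (g : G), g • x₀ = z.1 →
        (Φ z).1 = g • y₀ := by
      intro z g hg
      have := Classical.choose_spec z.2
      exact (hkey _ g).mp (this.trans hg.symm)
    let Ψ : {y : Y // y ∈ orbit G y₀} → {x : X // x ∈ orbit G x₀} := fun w =>
      ⟨(Classical.choose w.2 : G) • x₀, mem_orbit _ _⟩
    have hΨspec : ∀ (w : {y : Y // y ∈ orbit G y₀}) (g : G), g • y₀ = w.1 →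
        (Ψ w).1 = g • x₀ := by
      intro w g hg
      have := Classical.choose_spec w.2
      exact (hkey _ g).mpr (this.trans hg.symm)
    have hΦΨ : ∀ z, Ψ (Φ z) = z := by
      intro z
      obtain ⟨g, hg⟩ := z.2
      have h1 : (Φ z).1 = g • y₀ := hΦspec z g hg
      have h2 : (Ψ (Φ z)).1 = g • x₀ := hΨspec _ g h1.symm
      exact Subtype.ext (h2.trans hg)
    have hΨΦ : ∀ w, Φ (Ψ w) = w := by
      intro w
      obtain ⟨g, hg⟩ := w.2
      have h1 : (Ψ w).1 = g • x₀ := hΨspec w g hg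
      have h2 : (Φ (Ψ w)).1 = g • y₀ := hΦspec _ g h1.symm
      exact Subtype.ext (h2.trans hg)
    -- equivariance of Φ
    have hΦequiv : ∀ (z : {x : X // x ∈ orbit G x₀}) (g : G)
        (hz : g • z.1 ∈ orbit G x₀), (Φ ⟨g • z.1, hz⟩).1 = g • (Φ z).1 := by
      intro z g hz
      obtain ⟨a, ha⟩ := z.2
      have h1 : (Φ z).1 = a • y₀ := hΦspec z a ha
      have h2 : (Φ ⟨g • z.1, hz⟩).1 = (g * a) • y₀ := by
        apply hΦspec ⟨g • z.1, hz⟩ (g * a)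
        show (g * a) • x₀ = g • z.1
        rw [mul_smul]
        exact congrArg (g • ·) ha
      rw [h2, h1, mul_smul]
    have hΨequiv : ∀ (w : {y : Y // y ∈ orbit G y₀}) (g : G)
        (hw : g • w.1 ∈ orbit G y₀), (Ψ ⟨g • w.1, hw⟩).1 = g • (Ψ w).1 := by
      intro w g hw
      obtain ⟨a, ha⟩ := w.2
      have h1 : (Ψ w).1 = a • x₀ := hΨspec w a ha
      have h2 : (Ψ ⟨g • w.1, hw⟩).1 = (g * a) • x₀ := by
        apply hΨspec ⟨g • w.1, hw⟩ (g * a)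
        show (g * a) • y₀ = g • w.1
        rw [mul_smul]
        exact congrArg (g • ·) ha
      rw [h2, h1, mul_smul]
    -- complements
    let X' := {x : X // x ∉ orbit G x₀}
    let Y' := {y : Y // y ∉ orbit G y₀}
    have hsmulX : ∀ (g : G) (x : X), x ∉ orbit G x₀ → g • x ∉ orbit G x₀ := by
      intro g x hx hmem
      obtain ⟨c, hc⟩ := hmem
      refine hx ⟨g⁻¹ * c, ?_⟩
      show (g⁻¹ * c) • x₀ = x
      have hc' : c • x₀ = g • x := hc
      rw [mul_smul, hc', inv_smul_smul]
    have hsmulY : ∀ (g : G) (y : Y), y ∉ orbit G y₀ → g • y ∉ orbit G y₀ := by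
      intro g y hy hmem
      obtain ⟨c, hc⟩ := hmem
      refine hy ⟨g⁻¹ * c, ?_⟩
      show (g⁻¹ * c) • y₀ = y
      have hc' : c • y₀ = g • y := hc
      rw [mul_smul, hc', inv_smul_smul]
    letI instX' : MulAction G X' :=
      { smul := fun g z => ⟨g • z.1, hsmulX g z.1 z.2⟩
        one_smul := fun z => Subtype.ext (one_smul G z.1)
        mul_smul := fun a b z => Subtype.ext (mul_smul a b z.1) }
    letI instY' : MulAction G Y' :=
      { smul := fun g z => ⟨g • z.1, hsmulY g z.1 z.2⟩
        one_smul := fun z => Subtype.ext (one_smul G z.1)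
        mul_smul := fun a b z => Subtype.ext (mul_smul a b z.1) }
    letI fX' : Fintype X' := Fintype.ofFinite X'
    letI fY' : Fintype Y' := Fintype.ofFinite Y'
    -- card X' < n
    have hlt : Fintype.card X' < n := by
      rw [← hcard, Fintype.card_eq_nat_card, Fintype.card_eq_nat_card (α := X),
        ← Fintype.card_eq_nat_card (α := X'), ← Fintype.card_eq_nat_card (α := X)]
      have h1 : @Fintype.card X' (Subtype.fintype _) < Fintype.card X :=
        by convert (Fintype.card_subtype_lt (p := fun x => x ∉ orbit G x₀) (x := x₀) (by simp [mem_orbit_self]))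
      calc Fintype.card X' = @Fintype.card X' (Subtype.fintype _) :=
            Subsingleton.elim fX' (Subtype.fintype _) ▸ rfl
        _ < Fintype.card X := h1
    -- helper: smul stays in orbit
    have hinorbX : ∀ (g : G) (x : X), x ∈ orbit G x₀ → g • x ∈ orbit G x₀ := by
      intro g x hx
      obtain ⟨c, hc⟩ := hx
      refine ⟨g * c, ?_⟩
      show (g * c) • x₀ = g • x
      rw [mul_smul]
      exact congrArg (g • ·) hc
    have hinorbY : ∀ (g : G) (y : Y), y ∈ orbit G y₀ → g • y ∈ orbit G y₀ := by
      intro g y hy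
      obtain ⟨c, hc⟩ := hy
      refine ⟨g * c, ?_⟩
      show (g * c) • y₀ = g • y
      rw [mul_smul]
      exact congrArg (g • ·) hc
    -- fixed point counts for X', Y'
    have hcount : ∀ K : Subgroup G,
        Nat.card {z : X' // ∀ g ∈ K, g • z = z} = Nat.card {w : Y' // ∀ g ∈ K, g • w = w} := by
      intro K
      have eX : {z : X' // ∀ g ∈ K, g • z = z} ≃
          {x : X // (∀ g ∈ K, g • x = x) ∧ x ∉ orbit G x₀} :=
        { toFun := fun z => ⟨z.1.1, fun g hg => congrArg Subtype.val (z.2 g hg), z.1.2⟩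
          invFun := fun x => ⟨⟨x.1, x.2.2⟩, fun g hg => Subtype.ext (x.2.1 g hg)⟩
          left_inv := fun z => by ext; rfl
          right_inv := fun x => rfl }
      have eY : {w : Y' // ∀ g ∈ K, g • w = w} ≃
          {y : Y // (∀ g ∈ K, g • y = y) ∧ y ∉ orbit G y₀} :=
        { toFun := fun z => ⟨z.1.1, fun g hg => congrArg Subtype.val (z.2 g hg), z.1.2⟩
          invFun := fun y => ⟨⟨y.1, y.2.2⟩, fun g hg => Subtype.ext (y.2.1 g hg)⟩
          left_inv := fun z => by ext; rfl
          right_inv := fun y => rfl }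
      have splitX : Nat.card {x : X // ∀ g ∈ K, g • x = x} =
          Nat.card {x : X // (∀ g ∈ K, g • x = x) ∧ x ∈ orbit G x₀} +
          Nat.card {x : X // (∀ g ∈ K, g • x = x) ∧ x ∉ orbit G x₀} := by
        rw [← Nat.card_sum]
        apply Nat.card_congr
        exact ((Equiv.sumCompl (fun z : {x : X // ∀ g ∈ K, g • x = x} =>
          z.1 ∈ orbit G x₀)).symm.trans
          (Equiv.sumCongr
            (Equiv.subtypeSubtypeEquivSubtypeInter
              (fun x : X => ∀ g ∈ K, g • x = x) (fun x => x ∈ orbit G x₀))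
            (Equiv.subtypeSubtypeEquivSubtypeInter
              (fun x : X => ∀ g ∈ K, g • x = x) (fun x => x ∉ orbit G x₀))))
      have splitY : Nat.card {y : Y // ∀ g ∈ K, g • y = y} =
          Nat.card {y : Y // (∀ g ∈ K, g • y = y) ∧ y ∈ orbit G y₀} +
          Nat.card {y : Y // (∀ g ∈ K, g • y = y) ∧ y ∉ orbit G y₀} := by
        rw [← Nat.card_sum]
        apply Nat.card_congr
        exact ((Equiv.sumCompl (fun z : {y : Y // ∀ g ∈ K, g • y = y} =>
          z.1 ∈ orbit G y₀)).symm.trans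
          (Equiv.sumCongr
            (Equiv.subtypeSubtypeEquivSubtypeInter
              (fun y : Y => ∀ g ∈ K, g • y = y) (fun y => y ∈ orbit G y₀))
            (Equiv.subtypeSubtypeEquivSubtypeInter
              (fun y : Y => ∀ g ∈ K, g • y = y) (fun y => y ∉ orbit G y₀))))
      have orbEq : Nat.card {x : X // (∀ g ∈ K, g • x = x) ∧ x ∈ orbit G x₀} =
          Nat.card {y : Y // (∀ g ∈ K, g • y = y) ∧ y ∈ orbit G y₀} := by
        apply Nat.card_congr
        refine
          { toFun := fun x => ⟨(Φ ⟨x.1, x.2.2⟩).1, ?_, (Φ ⟨x.1, x.2.2⟩).2⟩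
            invFun := fun y => ⟨(Ψ ⟨y.1, y.2.2⟩).1, ?_, (Ψ ⟨y.1, y.2.2⟩).2⟩
            left_inv := ?_
            right_inv := ?_ }
        · intro g hg
          have hmem : g • x.1 ∈ orbit G x₀ := hinorbX g x.1 x.2.2
          have heq : (⟨g • x.1, hmem⟩ : {x : X // x ∈ orbit G x₀}) = ⟨x.1, x.2.2⟩ :=
            Subtype.ext (x.2.1 g hg)
          calc g • (Φ ⟨x.1, x.2.2⟩).1 = (Φ ⟨g • x.1, hmem⟩).1 :=
                (hΦequiv ⟨x.1, x.2.2⟩ g hmem).symm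
            _ = (Φ ⟨x.1, x.2.2⟩).1 := by rw [heq]
        · intro g hg
          have hmem : g • y.1 ∈ orbit G y₀ := hinorbY g y.1 y.2.2
          have heq : (⟨g • y.1, hmem⟩ : {y : Y // y ∈ orbit G y₀}) = ⟨y.1, y.2.2⟩ :=
            Subtype.ext (y.2.1 g hg)
          calc g • (Ψ ⟨y.1, y.2.2⟩).1 = (Ψ ⟨g • y.1, hmem⟩).1 :=
                (hΨequiv ⟨y.1, y.2.2⟩ g hmem).symm
            _ = (Ψ ⟨y.1, y.2.2⟩).1 := by rw [heq]
        · intro x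
          apply Subtype.ext
          show (Ψ (Φ ⟨x.1, x.2.2⟩)).1 = x.1
          exact congrArg Subtype.val (hΦΨ ⟨x.1, x.2.2⟩)
        · intro y
          apply Subtype.ext
          show (Φ (Ψ ⟨y.1, y.2.2⟩)).1 = y.1
          exact congrArg Subtype.val (hΨΦ ⟨y.1, y.2.2⟩)
      rw [Nat.card_congr eX, Nat.card_congr eY]
      have hK := h K
      omega
    -- apply induction hypothesis
    obtain ⟨f', hf'⟩ := ih (Fintype.card X') hlt X' Y' rfl hcount
    -- glue
    refine ⟨{
      toFun := fun x => if hx : x ∈ orbit G x₀ then (Φ ⟨x, hx⟩).1 else (f' ⟨x, hx⟩).1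
      invFun := fun y => if hy : y ∈ orbit G y₀ then (Ψ ⟨y, hy⟩).1 else (f'.symm ⟨y, hy⟩).1
      left_inv := ?_
      right_inv := ?_ }, ?_⟩
    · intro x
      by_cases hx : x ∈ orbit G x₀
      · simp only [dif_pos hx, dif_pos (Φ ⟨x, hx⟩).2]
        exact congrArg Subtype.val (hΦΨ ⟨x, hx⟩)
      · simp only [dif_neg hx, dif_neg (f' ⟨x, hx⟩).2]
        exact congrArg Subtype.val (f'.symm_apply_apply ⟨x, hx⟩)
    · intro y
      by_cases hy : y ∈ orbit G y₀
      · simp only [dif_pos hy, dif_pos (Ψ ⟨y, hy⟩).2]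
        exact congrArg Subtype.val (hΨΦ ⟨y, hy⟩)
      · simp only [dif_neg hy, dif_neg (f'.symm ⟨y, hy⟩).2]
        exact congrArg Subtype.val (f'.apply_symm_apply ⟨y, hy⟩)
    · intro g x
      by_cases hx : x ∈ orbit G x₀
      · have hgx : g • x ∈ orbit G x₀ := hinorbX g x hx
        simp only [Equiv.coe_fn_mk, dif_pos hx, dif_pos hgx]
        exact hΦequiv ⟨x, hx⟩ g hgx
      · have hgx : g • x ∉ orbit G x₀ := hsmulX g x hx
        simp only [Equiv.coe_fn_mk, dif_neg hx, dif_neg hgx]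
        have heq : (⟨g • x, hgx⟩ : X') = g • (⟨x, hx⟩ : X') := rfl
        rw [heq, hf' g ⟨x, hx⟩]
        rfl

theorem gset_iso_of_card_fixedPoints_eq {G X Y : Type*} [Group G] [Fintype G]
    [Fintype X] [Fintype Y] [MulAction G X] [MulAction G Y]
    (h : ∀ H : Subgroup G,
      Nat.card {x : X // ∀ g ∈ H, g • x = x} = Nat.card {y : Y // ∀ g ∈ H, g • y = y}) :
    ∃ f : X ≃ Y, ∀ (g : G) (x : X), f (g • x) = g • f x := by
  exact gset_aux (Fintype.card X) X Y rfl h
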